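/- Fix A > 0 and λ ∈ (0, 1/8), set ξ = √(1 − 8λ) ∈ (0, 1), and let s₀ = 1/2 + ξ/2. Suppose f : ℝ → ℝ satisfies (s(s−1)/2 + λ)·f(s) + s·f(s−1) = λ·A^s for all s ∈ ℝ. Then for every k ∈ ℕ, f(s₀ + k) = ((−2)^k · (3/2 + ξ/2)_k / (k! · (1 + ξ)_k)) · [ f(s₀) − (2λ/(3 + ξ)) · A^{s₀ + 1} · Σ_{j=0}^{k−1} (−A/2)^j · j! · (1 + ξ)_j / (5/2 + ξ/2)_j ]. -/

import Mathlib

set_option maxHeartbeats 2000000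


open scoped BigOperators

/-- The Pochhammer symbol (rising factorial): `(z)₀ = 1`, `(z)_{n+1} = (z)_n · (z + n)`. -/
noncomputable def poch (z : ℝ) : ℕ → ℝ
  | 0 => 1
  | n + 1 => poch z n * (z + (n : ℝ))

lemma poch_succ (z : ℝ) (n : ℕ) : poch z (n + 1) = poch z n * (z + n) := rfl

lemma poch_shift (z : ℝ) (n : ℕ) : poch z (n + 1) = z * poch (z + 1) n := by
  induction n with
  | zero => simp [poch]
  | succ n ih => rw [poch_succ, ih, poch_succ]; push_cast; ring

lemma poch_pos {z : ℝ} (hz : 0 < z) (n : ℕ) : 0 < poch z n := by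
  induction n with
  | zero => simp [poch]
  | succ n ih => exact mul_pos ih (by positivity)

/-- Iterating the fractional-moment recurrence forward from `s₀ = 1/2 + ξ/2`: any solution `f`
of `(s(s−1)/2+λ)·f(s) + s·f(s−1) = λ·A^s` satisfies, for every `k ∈ ℕ`,
`f(s₀+k) = ((−2)^k (3/2+ξ/2)_k/(k!(1+ξ)_k))·
  [f(s₀) − (2λ/(3+ξ))·A^{s₀+1}·Σ_{j=0}^{k−1} (−A/2)^j j! (1+ξ)_j/(5/2+ξ/2)_j]`. -/
theorem recurrence_iterated_from_singular_point
    (A lam : ℝ) (hA : 0 < A) (hlam : lam ∈ Set.Ioo (0 : ℝ) (1/8))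
    (ξ : ℝ) (hξ : ξ = Real.sqrt (1 - 8 * lam))
    (s₀ : ℝ) (hs₀ : s₀ = 1/2 + ξ/2)
    (f : ℝ → ℝ)
    (hf : ∀ s : ℝ, (s * (s - 1) / 2 + lam) * f s + s * f (s - 1) = lam * A ^ s) :
    ∀ k : ℕ,
      f (s₀ + k) =
        ((-2 : ℝ) ^ k * poch (3/2 + ξ/2) k / ((Nat.factorial k : ℝ) * poch (1 + ξ) k)) *
          (f s₀ - (2 * lam / (3 + ξ)) * A ^ (s₀ + 1) *
            ∑ j ∈ Finset.range k,
              (-(A / 2)) ^ j * (Nat.factorial j : ℝ) * poch (1 + ξ) j / poch (5/2 + ξ/2) j) := by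
  obtain ⟨hl0, hl8⟩ := hlam
  have h8 : 0 < 1 - 8 * lam := by linarith
  have hξpos : 0 < ξ := hξ ▸ Real.sqrt_pos.mpr h8
  have hξlt : ξ < 1 := by
    rw [hξ]
    nlinarith [Real.sq_sqrt h8.le, Real.sqrt_nonneg (1 - 8 * lam)]
  have hξ2 : ξ ^ 2 = 1 - 8 * lam := by rw [hξ]; exact Real.sq_sqrt h8.le
  have hlam' : lam = (1 - ξ ^ 2) / 8 := by linarith
  subst hs₀
  intro k
  induction k with
  | zero => simp [poch]
  | succ k ih =>
    -- shorthand
    set s₀ : ℝ := 1/2 + ξ/2 with hs₀def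
    have hApow : A ^ (s₀ + ((k : ℝ) + 1)) = A ^ (s₀ + 1) * A ^ k := by
      rw [show s₀ + ((k : ℝ) + 1) = (s₀ + 1) + (k : ℝ) by ring, Real.rpow_add hA,
        Real.rpow_natCast]
    have hrec := hf (s₀ + ((k : ℝ) + 1))
    rw [show s₀ + ((k : ℝ) + 1) - 1 = s₀ + k by ring] at hrec
    have hc : (s₀ + ((k : ℝ) + 1)) * (s₀ + (k : ℝ)) / 2 + lam
        = ((k : ℝ) + 1) * (ξ + k + 1) / 2 := by
      rw [hlam', hs₀def]; ring
    rw [hc] at hrec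
    have hcne : ((k : ℝ) + 1) * (ξ + k + 1) / 2 ≠ 0 := by positivity
    have hfs : f (s₀ + ((k : ℝ) + 1))
        = (lam * (A ^ (s₀ + 1) * A ^ k) - (s₀ + ((k : ℝ) + 1)) * f (s₀ + k))
            / (((k : ℝ) + 1) * (ξ + k + 1) / 2) := by
      rw [eq_div_iff hcne]
      rw [hApow] at hrec
      linarith [hrec]
    have hP3 : (0 : ℝ) < poch (3/2 + ξ/2) k := poch_pos (by linarith) k
    have hP1 : (0 : ℝ) < poch (1 + ξ) k := poch_pos (by linarith) k
    have h32k : (3 : ℝ)/2 + ξ/2 + k ≠ 0 := by positivity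
    have hP3' : poch (3/2 + ξ/2) k
        = (3/2 + ξ/2) * poch (5/2 + ξ/2) k / (3/2 + ξ/2 + k) := by
      have h := poch_shift (3/2 + ξ/2) k
      rw [show (3:ℝ)/2 + ξ/2 + 1 = 5/2 + ξ/2 by ring, poch_succ] at h
      rw [eq_div_iff h32k]
      linarith [h]
    have hP5 : (0 : ℝ) < poch (5/2 + ξ/2) k := poch_pos (by linarith) k
    have hfac : (0 : ℝ) < (Nat.factorial k : ℝ) := by
      exact_mod_cast Nat.factorial_pos k
    have hcast : ((k + 1 : ℕ) : ℝ) = (k : ℝ) + 1 := by push_cast; ring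
    rw [hcast, hfs, poch_succ, poch_succ, Finset.sum_range_succ,
      Nat.factorial_succ, ih, hlam', hP3']
    push_cast
    have h3ξ : (3 : ℝ) + ξ ≠ 0 := by linarith
    have h32 : (3 : ℝ)/2 + ξ/2 ≠ 0 := by linarith
    have h1ξk : (1 : ℝ) + ξ + k ≠ 0 := by positivity
    have hP5ne : poch (5/2 + ξ/2) k ≠ 0 := hP5.ne'
    have hP1ne : poch (1 + ξ) k ≠ 0 := hP1.ne'
    have hfacne : (Nat.factorial k : ℝ) ≠ 0 := hfac.ne'
    have h2k : ((-2) : ℝ) ^ k ≠ 0 := by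
      apply pow_ne_zero; norm_num
    rw [show (-(A/2) : ℝ) = A / (-2) by ring, div_pow]
    set Sm := ∑ j ∈ Finset.range k,
        (-(A / 2)) ^ j * (Nat.factorial j : ℝ) * poch (1 + ξ) j / poch (5/2 + ξ/2) j with hSm
    set P5 := poch (5/2 + ξ/2) k with hP5def
    set P1k := poch (1 + ξ) k with hP1def
    set Ap := A ^ (s₀ + 1) with hApdef
    field_simp
    ring
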